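/- For a genus g hyperelliptic Lefschetz fibration with g ≥ 2 satisfying the signature bound σ ≤ n − s − 4, one has s/n ≤ (3g+2)/(4(g−1)) − (2g+1)/(n(g−1)); in particular s/n ≤ (3g+2)/(4(g−1)), so ρ(g) ≤ (3g+2)/(4(g−1)). -/

import Mathlib

/-- For a genus `g ≥ 2` hyperelliptic Lefschetz fibration
satisfying the signature bound `σ ≤ n - s - 4`, one has
`s/n ≤ (3g+2)/(4(g-1)) - (2g+1)/(n(g-1))`; in particular
`s/n ≤ (3g+2)/(4(g-1))` (so `ρ(g) ≤ (3g+2)/(4(g-1))`). -/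
theorem ratio_estimate
    (g n : ℕ) (hg : 2 ≤ g) (hn : 0 < n)
    (sh : ℕ → ℕ)
    (s x σ : ℚ)
    (hs : s = ∑ h ∈ Finset.Icc 1 (g / 2), (sh h : ℚ))
    (hx : x = ∑ h ∈ Finset.Icc 1 (g / 2), (h : ℚ) * ((g : ℚ) - (h : ℚ)) * (sh h : ℚ))
    (hσ : σ = -(((g : ℚ) + 1) / (2 * (g : ℚ) + 1)) * (n : ℚ)
            + 4 * x / (2 * (g : ℚ) + 1) - s)
    (hbound : σ ≤ (n : ℚ) - s - 4) :
    s / (n : ℚ) ≤ (3 * (g : ℚ) + 2) / (4 * ((g : ℚ) - 1))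
        - (2 * (g : ℚ) + 1) / ((n : ℚ) * ((g : ℚ) - 1)) ∧
    s / (n : ℚ) ≤ (3 * (g : ℚ) + 2) / (4 * ((g : ℚ) - 1)) := by
  have hg' : (2:ℚ) ≤ (g:ℚ) := by exact_mod_cast hg
  have hn' : (0:ℚ) < (n:ℚ) := by exact_mod_cast hn
  have hg1 : (0:ℚ) < (g:ℚ) - 1 := by linarith
  have hpos : (0:ℚ) < 2 * (g:ℚ) + 1 := by linarith
  -- x ≥ (g-1) s
  have hx_ge : ((g:ℚ) - 1) * s ≤ x := by
    rw [hs, hx, Finset.mul_sum]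
    apply Finset.sum_le_sum
    intro h hh
    simp only [Finset.mem_Icc] at hh
    obtain ⟨h1, h2⟩ := hh
    have h1' : (1:ℚ) ≤ (h:ℚ) := by exact_mod_cast h1
    have h2n : h + 1 ≤ g := by omega
    have h2' : (h:ℚ) + 1 ≤ (g:ℚ) := by exact_mod_cast h2n
    have hsh : (0:ℚ) ≤ (sh h : ℚ) := by positivity
    nlinarith [mul_nonneg (mul_nonneg (by linarith : (0:ℚ) ≤ (h:ℚ) - 1)
      (by linarith : (0:ℚ) ≤ (g:ℚ) - (h:ℚ) - 1)) hsh]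
  -- clear the denominator in the signature bound
  have h2 : 4 * x ≤ (n:ℚ) * (3 * (g:ℚ) + 2) - 4 * (2 * (g:ℚ) + 1) := by
    have h := hbound
    rw [hσ] at h
    have hA : -(((g : ℚ) + 1) / (2 * (g : ℚ) + 1)) * (n : ℚ)
        + 4 * x / (2 * (g : ℚ) + 1)
        = (-(((g:ℚ) + 1) * (n:ℚ)) + 4 * x) / (2 * (g:ℚ) + 1) := by
      field_simp
    have h' : (-(((g:ℚ) + 1) * (n:ℚ)) + 4 * x) / (2 * (g:ℚ) + 1) ≤ (n:ℚ) - 4 := by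
      rw [← hA]; linarith
    rw [div_le_iff₀ hpos] at h'
    nlinarith [h']
  have key : 4 * ((g:ℚ) - 1) * s ≤ (n:ℚ) * (3 * (g:ℚ) + 2) - 4 * (2 * (g:ℚ) + 1) := by
    linarith
  have part1 : s / (n : ℚ) ≤ (3 * (g : ℚ) + 2) / (4 * ((g : ℚ) - 1))
      - (2 * (g : ℚ) + 1) / ((n : ℚ) * ((g : ℚ) - 1)) := by
    rw [div_sub_div _ _ (by positivity : (4 * ((g:ℚ) - 1)) ≠ 0)
      (by positivity : ((n:ℚ) * ((g:ℚ) - 1)) ≠ 0),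
      div_le_div_iff₀ hn' (by positivity)]
    nlinarith [mul_le_mul_of_nonneg_right key (by positivity : (0:ℚ) ≤ (n:ℚ) * ((g:ℚ) - 1))]
  refine ⟨part1, ?_⟩
  have : (0:ℚ) ≤ (2 * (g:ℚ) + 1) / ((n:ℚ) * ((g:ℚ) - 1)) := by positivity
  linarith
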